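/- arXiv:2310.19696 — 3 statements merged into one kernel-verified Lean document; each statement's English description precedes it below -/
import Mathlib

section
/- For the Zhou–Fan system, the endemic equilibria correspond exactly to the positive roots of the quadratic A i² + B i + C = 0, where A = v_s v_i, B = V_i v_s ω - μ η₀, C = ω μ V_i (1 - R_0), with v_s = β + ξμ, V_i = v_i + η, η₀ = βb/μ - v_i, and R_0 = βb/(μ V_i). More precisely: a pair (s,i) with i > 0 satisfies b - s(μ + βi/(1+ξi)) = 0 and sβ/(1+ξi) - ηω/(ω+i) - v_i = 0 if and only if i > 0, A i² + B i + C = 0, and s = b(1+ξi)/(μ + v_s i). -/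
private lemma cancel_aux {a x : ℝ} (ha : a ≠ 0) (h : a * x = 0) : x = 0 := by
  rcases mul_eq_zero.mp h with h | h
  · exact absurd h ha
  · exact h

/-- Endemic equilibria of the Zhou–Fan system correspond exactly to positive roots of
the quadratic `A i² + B i + C = 0`, together with `s = b(1+ξi)/(μ + v_s i)`. -/
theorem endemic_quadratic (b μ β γ δ ξ η ω s i : ℝ)
    (hb : 0 < b) (hμ : 0 < μ) (hβ : 0 < β) (hγ : 0 < γ) (hδ : 0 < δ)
    (hξ : 0 < ξ) (hη : 0 < η) (hω : 0 < ω) :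
    (0 < i ∧ b - s * (μ + β * i / (1 + ξ * i)) = 0 ∧
      s * β / (1 + ξ * i) - η * ω / (ω + i) - (γ + μ + δ) = 0) ↔
    (0 < i ∧
      ((β + ξ * μ) * (γ + μ + δ)) * i ^ 2 +
        (((γ + μ + δ) + η) * (β + ξ * μ) * ω - μ * (β * b / μ - (γ + μ + δ))) * i +
        ω * μ * ((γ + μ + δ) + η) * (1 - β * b / (μ * ((γ + μ + δ) + η))) = 0 ∧
      s = b * (1 + ξ * i) / (μ + (β + ξ * μ) * i)) := by
  constructor
  · rintro ⟨hi, h1, h2⟩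
    have hd1 : (0:ℝ) < 1 + ξ * i := by nlinarith
    have hd2 : (0:ℝ) < ω + i := by linarith
    have hd3 : (0:ℝ) < μ + (β + ξ * μ) * i := by nlinarith
    have hV : (0:ℝ) < γ + μ + δ + η := by positivity
    have hs : s = b * (1 + ξ * i) / (μ + (β + ξ * μ) * i) := by
      field_simp at h1 ⊢
      linarith [h1]
    subst hs
    refine ⟨hi, ?_, rfl⟩
    field_simp at h2 ⊢
    have hQ : ((β + ξ * μ) * (γ + μ + δ)) * i ^ 2 +
        ((γ + μ + δ + η) * (β + ξ * μ) * ω - (β * b - μ * (γ + μ + δ))) * i +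
        (ω * μ * (γ + μ + δ + η) - ω * β * b) = 0 :=
      cancel_aux (ne_of_gt hd1) (by linear_combination (-(1 + ξ * i)) * h2)
    linear_combination hQ
  · rintro ⟨hi, hq, hs⟩
    have hd1 : (0:ℝ) < 1 + ξ * i := by nlinarith
    have hd2 : (0:ℝ) < ω + i := by linarith
    have hd3 : (0:ℝ) < μ + (β + ξ * μ) * i := by nlinarith
    have hV : (0:ℝ) < γ + μ + δ + η := by positivity
    field_simp at hq
    have hQ : ((β + ξ * μ) * (γ + μ + δ)) * i ^ 2 +
        ((γ + μ + δ + η) * (β + ξ * μ) * ω - (β * b - μ * (γ + μ + δ))) * i +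
        (ω * μ * (γ + μ + δ + η) - ω * β * b) = 0 :=
      cancel_aux (a := μ * (γ + μ + δ + η)) (by positivity) (by linear_combination (μ * (γ + μ + δ + η)) * hq)
    subst hs
    refine ⟨hi, ?_, ?_⟩
    · field_simp
      ring
    · field_simp
      linear_combination (-1 : ℝ) * hQ
end

section
/- At any endemic equilibrium (s, i) of the Zhou–Fan two-dimensional system, eliminating s via the second stationarity equation s = (1+ξi)(ηω + v_i i + v_i ω)/(β(i+ω)), the determinant of the Jacobian equals det J = i/((1+ξi)(i+ω)²) · Ψ(i), where Ψ(i) = v_s v_i (i+ω)² + α(ω v_s - μ) and α = ηω. -/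
/-- At an endemic equilibrium of the Zhou–Fan system, eliminating `s` via the second
stationarity equation, the determinant of the Jacobian equals
`det J = i/((1+ξi)(i+ω)²) · Ψ(i)` with `Ψ(i) = v_s v_i (i+ω)² + α(ω v_s - μ)`, `α = ηω`. -/
theorem det_jacobian_endemic (b μ β γ δ ξ η ω s i : ℝ)
    (hb : 0 < b) (hμ : 0 < μ) (hβ : 0 < β) (hγ : 0 < γ) (hδ : 0 < δ)
    (hξ : 0 < ξ) (hη : 0 < η) (hω : 0 < ω) (hi : 0 < i)
    (hs : s = (1 + ξ * i) * (η * ω + (γ + μ + δ) * i + (γ + μ + δ) * ω) / (β * (i + ω))) :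
    Matrix.det
      !![-(β * i / (1 + ξ * i)) - μ, -(β * s / (1 + ξ * i) ^ 2);
         β * i / (1 + ξ * i),
         -(η * ω ^ 2 / (i + ω) ^ 2) + β * s / (1 + ξ * i) ^ 2 - (γ + μ + δ)] =
    i / ((1 + ξ * i) * (i + ω) ^ 2) *
      ((β + ξ * μ) * (γ + μ + δ) * (i + ω) ^ 2 + (η * ω) * (ω * (β + ξ * μ) - μ)) := by
  subst hs
  have h1 : (1 + ξ * i) ≠ 0 := by positivity
  have h2 : (i + ω) ≠ 0 := by positivity
  have h3 : β ≠ 0 := hβ.ne'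
  rw [Matrix.det_fin_two_of]
  field_simp
  ring
end

section
/- At an endemic equilibrium of the Zhou–Fan system, the trace of the Jacobian equals Tr J = -b/s + ηωi/(i+ω)² - βξsi/(1+ξi)²; in particular, a sufficient condition for Tr J < 0 is ηωi/(i+ω)² ≤ βξsi/(1+ξi)². -/
/-- At an endemic equilibrium of the Zhou–Fan system the trace of the Jacobian equals
`Tr J = -b/s + ηωi/(i+ω)² - βξsi/(1+ξi)²`; in particular `Tr J < 0` whenever
`ηωi/(i+ω)² ≤ βξsi/(1+ξi)²`. -/
theorem trace_jacobian_endemic (b μ β γ δ ξ η ω s i : ℝ)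
    (hb : 0 < b) (hμ : 0 < μ) (hβ : 0 < β) (hγ : 0 < γ) (hδ : 0 < δ)
    (hξ : 0 < ξ) (hη : 0 < η) (hω : 0 < ω) (hs : 0 < s) (hi : 0 < i)
    (heq1 : b - s * (μ + β * i / (1 + ξ * i)) = 0)
    (heq2 : i * (s * β / (1 + ξ * i) - η * ω / (ω + i) - (γ + μ + δ)) = 0) :
    ((-(β * i / (1 + ξ * i)) - μ) +
      (-(η * ω ^ 2 / (i + ω) ^ 2) + β * s / (1 + ξ * i) ^ 2 - (γ + μ + δ)) =
      -(b / s) + η * ω * i / (i + ω) ^ 2 - β * ξ * s * i / (1 + ξ * i) ^ 2) ∧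
    (η * ω * i / (i + ω) ^ 2 ≤ β * ξ * s * i / (1 + ξ * i) ^ 2 →
      (-(β * i / (1 + ξ * i)) - μ) +
        (-(η * ω ^ 2 / (i + ω) ^ 2) + β * s / (1 + ξ * i) ^ 2 - (γ + μ + δ)) < 0) := by
  have hd1 : (1 : ℝ) + ξ * i ≠ 0 := by positivity
  have hd2 : (ω : ℝ) + i ≠ 0 := by positivity
  have hd3 : (i : ℝ) + ω ≠ 0 := by positivity
  have h2 : s * β / (1 + ξ * i) - η * ω / (ω + i) - (γ + μ + δ) = 0 := by
    rcases mul_eq_zero.mp heq2 with h | h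
    · exact absurd h hi.ne'
    · exact h
  have hbs : b / s = μ + β * i / (1 + ξ * i) := by
    have : b = s * (μ + β * i / (1 + ξ * i)) := by linarith
    rw [this]; field_simp
  have hA : β * s / (1 + ξ * i) ^ 2 + β * ξ * s * i / (1 + ξ * i) ^ 2
      = s * β / (1 + ξ * i) := by
    rw [← add_div, div_eq_div_iff (by positivity) hd1]; ring
  have hB : η * ω ^ 2 / (i + ω) ^ 2 + η * ω * i / (i + ω) ^ 2
      = η * ω / (ω + i) := by
    rw [← add_div]
    rw [div_eq_div_iff (by positivity) hd2]; ring
  have key : ((-(β * i / (1 + ξ * i)) - μ) +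
      (-(η * ω ^ 2 / (i + ω) ^ 2) + β * s / (1 + ξ * i) ^ 2 - (γ + μ + δ)) =
      -(b / s) + η * ω * i / (i + ω) ^ 2 - β * ξ * s * i / (1 + ξ * i) ^ 2) := by
    rw [hbs]; linarith
  refine ⟨key, fun hle => ?_⟩
  rw [key]
  have hbspos : 0 < b / s := div_pos hb hs
  linarith
end
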